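/- Let b, c, d be nonnegative integers and let p be an integer with p ≤ 0 and 2d ≤ b+c+1. Then E(1,b,c,d,p) = C(b+c, b) − ∑_{i=0}^{d+p−1} C(b+c−2(i−p)−1, b+2p−i−1) · ( C(2(i−p), i−2p) − C(2(i−p), i−1) ), where the sum is empty if d+p ≤ 0. (This follows from the reflection principle for lattice paths.) -/
import Mathlib


open Finset

noncomputable section

/-- Binomial coefficient with integer arguments, equal to `0` whenever `k < 0` or `k > n`. -/
def ibinom (n k : ℤ) : ℚ :=
  if 0 ≤ k ∧ k ≤ n then (n.toNat.choose k.toNat : ℚ) else 0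

/-- The Pochhammer symbol (rising factorial) `x (x+1) ⋯ (x+n-1)`. -/
def poch (x : ℚ) (n : ℕ) : ℚ := (ascPochhammer ℚ n).eval x

/-- MacMahon's product `M(a,b,c)`. -/
def macmahon (a b c : ℕ) : ℚ :=
  ∏ i ∈ Finset.range a,
    ((Nat.factorial i : ℚ) * (Nat.factorial (b + c + i) : ℚ)) /
      ((Nat.factorial (b + i) : ℚ) * (Nat.factorial (c + i) : ℚ))

/-- The matrix `Q(a,b,c,d,p)` (with `1`-based indices `i, j ∈ {1, …, a+d}`):
rows/columns with index `≤ a` are lateral, the rest are intrusive. -/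
def Qmat (a b c d : ℕ) (p : ℤ) : Matrix (Fin (a + d)) (Fin (a + d)) ℚ :=
  Matrix.of fun i j =>
    if (i : ℕ) < a then
      if (j : ℕ) < a then
        ibinom ((b : ℤ) + c) ((c : ℤ) - (((i : ℕ) : ℤ) + 1) + (((j : ℕ) : ℤ) + 1))
      else
        ibinom (2 * (((j : ℕ) : ℤ) - a + 1) - 1)
          ((((j : ℕ) : ℤ) - a + 1) - (((i : ℕ) : ℤ) + 1) + p)
    else
      if (j : ℕ) < a then
        ibinom ((b : ℤ) + c - 2 * (((i : ℕ) : ℤ) - a + 1) + 1)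
          ((c : ℤ) - (((i : ℕ) : ℤ) - a + 1) + (((j : ℕ) : ℤ) + 1) - p)
      else
        ibinom (2 * (((j : ℕ) : ℤ) - ((i : ℕ) : ℤ))) (((j : ℕ) : ℤ) - ((i : ℕ) : ℤ))

/-- `E(a,b,c,d,p) = det Q(a,b,c,d,p)`, the signed count of lozenge tilings of the
`(a,b,c)`-hexagon with an even intrusion of length `d` at position `p`. -/
def E (a b c d : ℕ) (p : ℤ) : ℚ := (Qmat a b c d p).det

lemma ibinom_neg {n k : ℤ} (h : k < 0) : ibinom n k = 0 := by
  unfold ibinom; rw [if_neg]; omega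

lemma ibinom_lt {n k : ℤ} (h : n < k) : ibinom n k = 0 := by
  unfold ibinom; rw [if_neg]; omega

lemma ibinom_of_mem {n k : ℤ} (h0 : 0 ≤ k) (h1 : k ≤ n) :
    ibinom n k = (n.toNat.choose k.toNat : ℚ) := if_pos ⟨h0, h1⟩

lemma ibinom_symm (n k : ℤ) : ibinom n (n - k) = ibinom n k := by
  unfold ibinom
  by_cases h : 0 ≤ k ∧ k ≤ n
  · rw [if_pos (by omega), if_pos h]
    have h1 : (n - k).toNat = n.toNat - k.toNat := by omega
    have h2 : k.toNat ≤ n.toNat := by omega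
    rw [h1, Nat.choose_symm h2]
  · rw [if_neg (by omega), if_neg h]

lemma ibinom_pascal (n k : ℤ) (hn : 0 ≤ n) :
    ibinom (n + 1) k = ibinom n k + ibinom n (k - 1) := by
  rcases lt_trichotomy k 0 with hk | hk | hk
  · rw [ibinom_neg hk, ibinom_neg hk, ibinom_neg (by omega)]; ring
  · subst hk
    have h3 : ibinom n (0 - 1) = 0 := ibinom_neg (by norm_num)
    rw [h3, ibinom_of_mem le_rfl (by omega), ibinom_of_mem le_rfl hn]
    simp
  · by_cases hkn : k ≤ n
    · rw [ibinom_of_mem (by omega) (by omega), ibinom_of_mem (by omega) hkn,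
        ibinom_of_mem (by omega) (by omega)]
      have e1 : (n + 1).toNat = n.toNat + 1 := by omega
      have e2 : k.toNat = (k - 1).toNat + 1 := by omega
      rw [e1, e2, Nat.choose_succ_succ]
      push_cast; ring
    · by_cases hk1 : k = n + 1
      · have h1 : ibinom (n + 1) k = 1 := by
          rw [ibinom_of_mem (by omega) (by omega),
            show k.toNat = (n + 1).toNat from by omega, Nat.choose_self]
          norm_num
        have h2 : ibinom n k = 0 := ibinom_lt (by omega)
        have h3 : ibinom n (k - 1) = 1 := by
          rw [ibinom_of_mem (by omega) (by omega),
            show (k - 1).toNat = n.toNat from by omega, Nat.choose_self]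
          norm_num
        rw [h1, h2, h3]; ring
      · rw [ibinom_lt (by omega), ibinom_lt (by omega), ibinom_lt (by omega)]; ring

lemma ibinom_pascal2 (n k : ℤ) (hn : 0 ≤ n) :
    ibinom (n + 2) k = ibinom n k + 2 * ibinom n (k - 1) + ibinom n (k - 2) := by
  rw [show n + 2 = (n + 1) + 1 from by ring, ibinom_pascal _ _ (by omega),
    ibinom_pascal _ _ hn, ibinom_pascal _ _ hn, show k - 1 - 1 = k - 2 from by ring]
  ring

/-- `a_t = C(2t, t)`. -/
def za (t : ℤ) : ℚ := ibinom (2 * t) t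

lemma za_neg {t : ℤ} (h : t < 0) : za t = 0 := ibinom_neg h

lemma za_zero : za 0 = 1 := by
  unfold za; rw [ibinom_of_mem le_rfl (by norm_num)]; simp

/-- `d_q(N) = C(2N, N+q) - C(2N, N+q+1)`. -/
def ddz (q N : ℤ) : ℚ := ibinom (2 * N) (N + q) - ibinom (2 * N) (N + q + 1)

lemma ddz_succ (q N : ℤ) (hN : 0 ≤ N) :
    ddz q (N + 1) = ddz (q - 1) N + 2 * ddz q N + ddz (q + 1) N := by
  unfold ddz
  rw [show 2 * (N + 1) = 2 * N + 2 from by ring,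
    show N + 1 + q = (N + q) + 1 from by ring,
    ibinom_pascal2 _ _ (by omega), ibinom_pascal2 _ _ (by omega)]
  ring_nf
lemma ddz_neg_one (N : ℤ) : ddz (-1) N = - ddz 0 N := by
  unfold ddz
  have h1 : ibinom (2 * N) (N + -1) = ibinom (2 * N) (N + 0 + 1) := by
    rw [show N + -1 = 2 * N - (N + 0 + 1) from by ring, ibinom_symm]
  have h2 : N + -1 + 1 = N + 0 := by ring
  rw [h1, h2]
  ring

lemma ddz_zero_apply (q : ℤ) (hq : 0 ≤ q) : ddz q 0 = if q = 0 then 1 else 0 := by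
  unfold ddz
  by_cases h : q = 0
  · subst h; rw [if_pos rfl]
    rw [show (0:ℤ) + 0 = 0 from by ring]
    rw [ibinom_of_mem le_rfl (by norm_num), ibinom_lt (by norm_num)]
    simp
  · rw [if_neg h, ibinom_lt (by omega), ibinom_lt (by omega)]; ring

/-- Key convolution identity (reflection principle):
`∑_{N=0}^{K} (C(2N,N+q) - C(2N,N+q+1)) C(2(K-N),K-N) = C(2K+1, K+q+1)`. -/
lemma conv_identity (K : ℕ) : ∀ q : ℤ, 0 ≤ q →
    ∑ N ∈ Finset.range (K + 1), ddz q N * za ((K : ℤ) - N)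
      = ibinom (2 * (K : ℤ) + 1) ((K : ℤ) + q + 1) := by
  induction K with
  | zero =>
      intro q hq
      rw [Finset.sum_range_one]
      simp only [Nat.cast_zero, sub_zero, za_zero, mul_one]
      rw [ddz_zero_apply _ hq]
      by_cases h : q = 0
      · rw [if_pos h, h]
        rw [show 2 * (0:ℤ) + 1 = 1 from by ring, show (0:ℤ) + 0 + 1 = 1 from by ring]
        rw [ibinom_of_mem (by norm_num) le_rfl]; simp
      · rw [if_neg h, ibinom_lt (by omega)]
  | succ K ih =>
      intro q hq
      rw [Finset.sum_range_succ']
      have harg : ∀ N : ℕ, ((K + 1 : ℕ) : ℤ) - ((N + 1 : ℕ) : ℤ) = (K : ℤ) - N := by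
        intro N; push_cast; ring
      by_cases hq0 : q = 0
      · subst hq0
        have hrec : ∀ N ∈ Finset.range (K + 1),
            ddz 0 (((N : ℕ) + 1 : ℕ)) * za (((K + 1 : ℕ) : ℤ) - ((N + 1 : ℕ) : ℤ))
              = (ddz 0 N + ddz 1 N) * za ((K : ℤ) - N) := by
          intro N _
          rw [harg N]
          congr 1
          push_cast
          rw [ddz_succ _ _ (by positivity), show (0:ℤ) - 1 = -1 from by norm_num,
            ddz_neg_one, show (0:ℤ) + 1 = 1 from by norm_num]
          ring
        rw [Finset.sum_congr rfl hrec]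
        simp only [add_mul]
        rw [Finset.sum_add_distrib, ih 0 le_rfl, ih 1 (by norm_num)]
        simp only [Nat.cast_zero, sub_zero, Nat.cast_ofNat, Nat.cast_add, Nat.cast_one]
        rw [ddz_zero_apply 0 le_rfl, if_pos rfl, one_mul]
        unfold za
        rw [show (2 * ((K : ℤ) + 1) + 1 : ℤ) = (2 * (K : ℤ) + 1) + 2 from by ring,
          ibinom_pascal2 (2 * (K : ℤ) + 1) _ (by positivity),
          show (2 : ℤ) * ((K : ℤ) + 1) = (2 * (K : ℤ) + 1) + 1 from by ring,
          ibinom_pascal (2 * (K : ℤ) + 1) ((K : ℤ) + 1) (by positivity)]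
        ring_nf
      · have hrec : ∀ N ∈ Finset.range (K + 1),
            ddz q (((N : ℕ) + 1 : ℕ)) * za (((K + 1 : ℕ) : ℤ) - ((N + 1 : ℕ) : ℤ))
              = (ddz (q - 1) N * za ((K : ℤ) - N) + 2 * (ddz q N * za ((K : ℤ) - N))
                  + ddz (q + 1) N * za ((K : ℤ) - N)) := by
          intro N _
          rw [harg N]
          push_cast
          rw [ddz_succ _ _ (by positivity)]
          ring
        rw [Finset.sum_congr rfl hrec]
        rw [Finset.sum_add_distrib, Finset.sum_add_distrib, ← Finset.mul_sum,
          ih (q - 1) (by omega), ih q hq, ih (q + 1) (by omega)]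
        simp only [Nat.cast_zero, sub_zero, Nat.cast_add, Nat.cast_one]
        rw [ddz_zero_apply q hq, if_neg hq0, zero_mul]
        rw [show (2 : ℤ) * ((K : ℤ) + 1) + 1 = (2 * (K : ℤ) + 1) + 2 from by ring,
          ibinom_pascal2 (2 * (K : ℤ) + 1) _ (by positivity)]
        ring_nf
/-- `s_n = C(2n-2, n-1+p) - C(2n-2, n+p-2)`. -/
def sfun (p : ℤ) (n : ℕ) : ℚ :=
  ibinom (2 * (n : ℤ) - 2) ((n : ℤ) - 1 + p) - ibinom (2 * (n : ℤ) - 2) ((n : ℤ) + p - 2)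

lemma sfun_eq_ddz (p : ℤ) (l : ℕ) : sfun p (l + 1) = ddz (-p) l := by
  unfold sfun ddz
  push_cast
  have e1 : ibinom (2 * (l : ℤ)) ((l : ℤ) + p) = ibinom (2 * (l : ℤ)) ((l : ℤ) + -p) := by
    rw [show (l : ℤ) + p = 2 * (l : ℤ) - ((l : ℤ) + -p) from by ring, ibinom_symm]
  have e2 : ibinom (2 * (l : ℤ)) ((l : ℤ) + p - 1)
      = ibinom (2 * (l : ℤ)) ((l : ℤ) + -p + 1) := by
    rw [show (l : ℤ) + p - 1 = 2 * (l : ℤ) - ((l : ℤ) + -p + 1) from by ring, ibinom_symm]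
  rw [show 2 * ((l : ℤ) + 1) - 2 = 2 * (l : ℤ) from by ring,
    show (l : ℤ) + 1 - 1 + p = (l : ℤ) + p from by ring,
    show (l : ℤ) + 1 + p - 2 = (l : ℤ) + p - 1 from by ring, e1, e2]

lemma row0_sum (p : ℤ) (hp : p ≤ 0) (m j : ℕ) (hj : j ≤ m) :
    ∑ l ∈ Finset.range (m + 1), sfun p (l + 1) * za ((j : ℤ) - l)
      = ibinom (2 * (j : ℤ) + 1) ((j : ℤ) + p) := by
  have htrunc : ∑ l ∈ Finset.range (m + 1), sfun p (l + 1) * za ((j : ℤ) - l)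
      = ∑ l ∈ Finset.range (j + 1), sfun p (l + 1) * za ((j : ℤ) - l) := by
    symm
    apply Finset.sum_subset (Finset.range_subset_range.2 (by omega))
    intro l _ hl
    rw [Finset.mem_range] at hl
    rw [za_neg (by omega), mul_zero]
  rw [htrunc, Finset.sum_congr rfl (fun l _ => by rw [sfun_eq_ddz p l]),
    conv_identity j (-p) (by omega),
    show (j : ℤ) + -p + 1 = (2 * (j : ℤ) + 1) - ((j : ℤ) + p) from by ring, ibinom_symm]

/-- Matrix `M`: first row `C(2j+1, j+p)`, other rows Toeplitz of central binomials. -/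
def Mm (p : ℤ) (m : ℕ) : Matrix (Fin (m + 1)) (Fin (m + 1)) ℚ :=
  Matrix.of fun i j =>
    if (i : ℕ) = 0 then ibinom (2 * ((j : ℕ) : ℤ) + 1) (((j : ℕ) : ℤ) + p)
    else za (((j : ℕ) : ℤ) + 1 - ((i : ℕ) : ℤ))

def Nm (p : ℤ) (m : ℕ) : Matrix (Fin (m + 1)) (Fin (m + 1)) ℚ :=
  Matrix.of fun i j =>
    if (i : ℕ) = 0 then sfun p ((j : ℕ) + 1)
    else if (j : ℕ) + 1 = (i : ℕ) then 1 else 0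

def Am (m : ℕ) : Matrix (Fin (m + 1)) (Fin (m + 1)) ℚ :=
  Matrix.of fun i j => za (((j : ℕ) : ℤ) - ((i : ℕ) : ℤ))

lemma Mm_factor (p : ℤ) (hp : p ≤ 0) (m : ℕ) : Mm p m = Nm p m * Am m := by
  ext i j
  rw [Matrix.mul_apply]
  by_cases hi : (i : ℕ) = 0
  · simp only [Mm, Nm, Am, Matrix.of_apply, hi, if_pos, if_true]
    rw [Fin.sum_univ_eq_sum_range (fun l => sfun p (l + 1) * za (((j : ℕ) : ℤ) - l)) (m + 1)]
    exact (row0_sum p hp m j (by omega)).symm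
  · simp only [Mm, Nm, Am, Matrix.of_apply, hi, if_false]
    have hi1 : 1 ≤ (i : ℕ) := by omega
    have hlt : (i : ℕ) - 1 < m + 1 := by omega
    rw [Finset.sum_eq_single (⟨(i : ℕ) - 1, hlt⟩ : Fin (m + 1))]
    · rw [if_pos (by simp; omega)]
      have : ((((⟨(i : ℕ) - 1, hlt⟩ : Fin (m + 1)) : ℕ)) : ℤ) = ((i : ℕ) : ℤ) - 1 := by
        simp; omega
      rw [this, one_mul]
      congr 1
      ring
    · intro l _ hl
      rw [if_neg, zero_mul]
      intro hll
      apply hl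
      apply Fin.ext
      simp only []
      omega
    · intro h; exact absurd (Finset.mem_univ _) h
lemma det_Am (m : ℕ) : (Am m).det = 1 := by
  have h : (Am m).BlockTriangular id := by
    intro i j hij
    simp only [Am, Matrix.of_apply]
    exact za_neg (by simp only [id] at hij; omega)
  rw [Matrix.det_of_upperTriangular h]
  have hd : ∀ i : Fin (m + 1), Am m i i = 1 := by
    intro i
    simp only [Am, Matrix.of_apply, sub_self]
    exact za_zero
  rw [Finset.prod_congr rfl (fun i _ => hd i), Finset.prod_const_one]

lemma det_Nm (p : ℤ) (m : ℕ) : (Nm p m).det = (-1) ^ m * sfun p (m + 1) := by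
  rw [Matrix.det_succ_row_zero]
  rw [Finset.sum_eq_single (Fin.last m)]
  · have h0 : (Nm p m) 0 (Fin.last m) = sfun p (m + 1) := by
      simp [Nm]
    have hsub : (Nm p m).submatrix Fin.succ (Fin.last m).succAbove = 1 := by
      ext r s
      rw [Matrix.submatrix_apply, Fin.succAbove_last, Matrix.one_apply]
      simp only [Nm, Matrix.of_apply, Fin.val_succ, Fin.coe_castSucc]
      rw [if_neg (by omega)]
      by_cases h : r = s
      · subst h; rw [if_pos rfl, if_pos rfl]
      · rw [if_neg (fun hc => h (Fin.ext (by omega))), if_neg h]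
    rw [hsub, Matrix.det_one, h0, Fin.val_last, mul_one]
  · intro jj _ hjj
    have hne : (jj : ℕ) ≠ m := fun h => hjj (Fin.ext (by simp [h]))
    have hlt : (jj : ℕ) < m := by have := jj.isLt; omega
    have hz : ((Nm p m).submatrix Fin.succ jj.succAbove).det = 0 := by
      apply Matrix.det_eq_zero_of_row_eq_zero ⟨(jj : ℕ), hlt⟩
      intro s
      rw [Matrix.submatrix_apply]
      simp only [Nm, Matrix.of_apply, Fin.val_succ]
      rw [if_neg (by omega), if_neg]
      intro hc
      exact absurd (Fin.ext (show ((jj.succAbove s : ℕ)) = (jj : ℕ) by omega))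
        (Fin.succAbove_ne jj s)
    rw [hz, mul_zero]
  · intro h; exact absurd (Finset.mem_univ _) h

lemma det_Mm (p : ℤ) (hp : p ≤ 0) (m : ℕ) :
    (Mm p m).det = (-1) ^ m * sfun p (m + 1) := by
  rw [Mm_factor p hp m, Matrix.det_mul, det_Am, mul_one, det_Nm]
def wfun (b c : ℕ) (p : ℤ) (n : ℕ) : ℚ :=
  ibinom ((b : ℤ) + c - 2 * (n : ℤ) + 1) ((c : ℤ) - (n : ℤ) + 1 - p)

def Qd (b c : ℕ) (p : ℤ) (d : ℕ) : Matrix (Fin (d + 1)) (Fin (d + 1)) ℚ :=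
  Matrix.of fun i j =>
    if (i : ℕ) = 0 then
      if (j : ℕ) = 0 then ibinom ((b : ℤ) + c) c
      else ibinom (2 * ((j : ℕ) : ℤ) - 1) (((j : ℕ) : ℤ) - 1 + p)
    else
      if (j : ℕ) = 0 then
        ibinom ((b : ℤ) + c - 2 * ((i : ℕ) : ℤ) + 1) ((c : ℤ) - ((i : ℕ) : ℤ) + 1 - p)
      else za (((j : ℕ) : ℤ) - ((i : ℕ) : ℤ))

lemma E_eq_det_Qd (b c d : ℕ) (p : ℤ) : E 1 b c d p = (Qd b c p d).det := by
  have h : d + 1 = 1 + d := by omega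
  unfold E
  rw [← Matrix.det_submatrix_equiv_self (finCongr h) (Qmat 1 b c d p)]
  congr 1
  ext i j
  rw [Matrix.submatrix_apply]
  simp only [Qmat, Qd, Matrix.of_apply, finCongr_apply, Fin.coe_cast, Nat.cast_one]
  by_cases hi : (i : ℕ) = 0
  · rw [if_pos (show (i : ℕ) < 1 by omega), if_pos hi]
    by_cases hj : (j : ℕ) = 0
    · rw [if_pos (show (j : ℕ) < 1 by omega), if_pos hj]
      congr 1 <;> omega
    · rw [if_neg (show ¬ (j : ℕ) < 1 by omega), if_neg hj]
      congr 1 <;> omega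
  · rw [if_neg (show ¬ (i : ℕ) < 1 by omega), if_neg hi]
    by_cases hj : (j : ℕ) = 0
    · rw [if_pos (show (j : ℕ) < 1 by omega), if_pos hj]
      congr 1 <;> omega
    · rw [if_neg (show ¬ (j : ℕ) < 1 by omega), if_neg hj]
      unfold za
      congr 1

lemma det_Qd_succ (b c d : ℕ) (p : ℤ) (hp : p ≤ 0) :
    (Qd b c p (d + 1)).det = (Qd b c p d).det - wfun b c p (d + 1) * sfun p (d + 1) := by
  rw [Matrix.det_succ_row (Qd b c p (d + 1)) (Fin.last (d + 1))]
  have hne : (0 : Fin (d + 2)) ≠ Fin.last (d + 1) := by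
    intro h
    have := congrArg (fun x : Fin (d + 2) => (x : ℕ)) h
    simp [Fin.val_last] at this
  rw [← Finset.sum_subset (Finset.subset_univ ({0, Fin.last (d + 1)} : Finset (Fin (d + 2))))
    (by
      intro j _ hj
      simp only [Finset.mem_insert, Finset.mem_singleton] at hj
      push_neg at hj
      obtain ⟨hj0, hjl⟩ := hj
      have hj0' : (j : ℕ) ≠ 0 := fun h => hj0 (Fin.ext (by simp [h]))
      have hjl' : (j : ℕ) ≠ d + 1 := fun h => hjl (Fin.ext (by simp [h, Fin.val_last]))
      have hQ : Qd b c p (d + 1) (Fin.last (d + 1)) j = 0 := by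
        simp only [Qd, Matrix.of_apply, Fin.val_last]
        rw [if_neg (by omega), if_neg hj0']
        exact za_neg (by have := j.isLt; omega)
      rw [hQ, mul_zero, zero_mul]),
    Finset.sum_pair hne]
  -- term at j = last
  have hQll : Qd b c p (d + 1) (Fin.last (d + 1)) (Fin.last (d + 1)) = 1 := by
    simp only [Qd, Matrix.of_apply, Fin.val_last]
    rw [if_neg (by omega), if_neg (by omega), sub_self, za_zero]
  have hsubll : (Qd b c p (d + 1)).submatrix (Fin.last (d + 1)).succAbove
      (Fin.last (d + 1)).succAbove = Qd b c p d := by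
    ext r s
    rw [Matrix.submatrix_apply, Fin.succAbove_last]
    simp only [Qd, Matrix.of_apply, Fin.coe_castSucc]
  have hsub0 : (Qd b c p (d + 1)).submatrix (Fin.last (d + 1)).succAbove
      ((0 : Fin (d + 2)).succAbove) = Mm p d := by
    ext r s
    rw [Matrix.submatrix_apply, Fin.succAbove_last, Fin.succAbove_zero]
    simp only [Qd, Mm, Matrix.of_apply, Fin.coe_castSucc, Fin.val_succ]
    by_cases hr : (r : ℕ) = 0
    · rw [if_pos hr, if_pos hr, if_neg (by omega)]
      congr 1 <;> push_cast <;> ring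
    · rw [if_neg hr, if_neg hr, if_neg (by omega)]
      congr 1 <;> push_cast <;> ring
  have hQl0 : Qd b c p (d + 1) (Fin.last (d + 1)) 0 = wfun b c p (d + 1) := by
    simp only [Qd, Matrix.of_apply, Fin.val_last, Fin.val_zero, wfun]
    rw [if_neg (by omega)]
    simp
  rw [hQll, hsubll, hsub0, hQl0, det_Mm p hp d]
  simp only [Fin.val_last, Fin.val_zero]
  have hpow1 : (-1 : ℚ) ^ (d + 1 + (d + 1)) = 1 := Even.neg_one_pow ⟨d + 1, rfl⟩
  have hpow2 : (-1 : ℚ) ^ (d + 1 + 0) * ((-1 : ℚ) ^ d) = -1 := by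
    rw [← pow_add]
    exact Odd.neg_one_pow ⟨d, by ring⟩
  linear_combination (wfun b c p (d + 1) * sfun p (d + 1)) * hpow2
    + (Qd b c p d).det * hpow1
lemma det_Qd_formula (b c : ℕ) (p : ℤ) (hp : p ≤ 0) (d : ℕ) :
    (Qd b c p d).det =
      ibinom ((b : ℤ) + c) (b : ℤ) -
        ∑ i ∈ Finset.range ((d : ℤ) + p).toNat,
          ibinom ((b : ℤ) + c - 2 * ((i : ℤ) - p) - 1) ((b : ℤ) + 2 * p - (i : ℤ) - 1) *
            (ibinom (2 * ((i : ℤ) - p)) ((i : ℤ) - 2 * p) -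
              ibinom (2 * ((i : ℤ) - p)) ((i : ℤ) - 1)) := by
  induction d with
  | zero =>
      have h0 : (((0 : ℕ) : ℤ) + p).toNat = 0 := by
        have : ((0 : ℕ) : ℤ) = 0 := rfl
        omega
      rw [h0, Finset.sum_range_zero, sub_zero, Matrix.det_fin_one]
      simp only [Qd, Matrix.of_apply, Fin.val_zero]
      simp only [if_true]
      have hsym := ibinom_symm ((b : ℤ) + c) (b : ℤ)
      rw [show (b : ℤ) + (c : ℤ) - (b : ℤ) = (c : ℤ) from by ring] at hsym
      exact hsym
  | succ d ih =>
      rw [det_Qd_succ b c d p hp, ih]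
      by_cases hcase : (d : ℤ) + 1 + p ≤ 0
      · have h1 : (((d + 1 : ℕ) : ℤ) + p).toNat = 0 := by push_cast; omega
        have h2 : ((d : ℤ) + p).toNat = 0 := by omega
        rw [h1, h2]
        have hs : sfun p (d + 1) = 0 := by
          unfold sfun
          rw [ibinom_neg (by push_cast; omega), ibinom_neg (by push_cast; omega)]
          ring
        rw [hs]
        ring
      · have h3 : (((d + 1 : ℕ) : ℤ) + p).toNat = ((d : ℤ) + p).toNat + 1 := by
          push_cast; omega
        rw [h3, Finset.sum_range_succ]
        have hi0 : ((((d : ℤ) + p).toNat : ℕ) : ℤ) = (d : ℤ) + p := by omega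
        rw [hi0]
        have hw : ibinom ((b : ℤ) + c - 2 * (((d : ℤ) + p) - p) - 1)
            ((b : ℤ) + 2 * p - ((d : ℤ) + p) - 1) = wfun b c p (d + 1) := by
          unfold wfun
          push_cast
          rw [show (b : ℤ) + 2 * p - ((d : ℤ) + p) - 1
              = ((b : ℤ) + c - 2 * (((d : ℤ) + p) - p) - 1) - ((c : ℤ) - ((d : ℤ) + 1) + 1 - p)
              from by ring, ibinom_symm,
            show (b : ℤ) + c - 2 * (((d : ℤ) + p) - p) - 1 = (b : ℤ) + c - 2 * ((d : ℤ) + 1) + 1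
              from by ring]
        have hs1 : ibinom (2 * (((d : ℤ) + p) - p)) (((d : ℤ) + p) - 2 * p)
            = ibinom (2 * ((d + 1 : ℕ) : ℤ) - 2) (((d + 1 : ℕ) : ℤ) - 1 + p) := by
          push_cast
          rw [show ((d : ℤ) + p) - 2 * p = (2 * (((d : ℤ) + p) - p)) - ((d : ℤ) + 1 - 1 + p)
              from by ring, ibinom_symm,
            show 2 * (((d : ℤ) + p) - p) = 2 * ((d : ℤ) + 1) - 2 from by ring]
        have hs2 : ibinom (2 * (((d : ℤ) + p) - p)) (((d : ℤ) + p) - 1)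
            = ibinom (2 * ((d + 1 : ℕ) : ℤ) - 2) (((d + 1 : ℕ) : ℤ) + p - 2) := by
          push_cast
          congr 1 <;> ring
        have hsf : ibinom (2 * (((d : ℤ) + p) - p)) (((d : ℤ) + p) - 2 * p)
            - ibinom (2 * (((d : ℤ) + p) - p)) (((d : ℤ) + p) - 1) = sfun p (d + 1) := by
          rw [hs1, hs2]; rfl
        rw [hw, hsf]
        ring


/-- Reflection principle: explicit formula for `E(1,b,c,d,p)` for `p ≤ 0` and
`2d ≤ b+c+1`. -/
theorem E_one_reflection (b c d : ℕ) (p : ℤ) (hp : p ≤ 0) (hd : 2 * d ≤ b + c + 1) :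
    E 1 b c d p =
      ibinom ((b : ℤ) + c) (b : ℤ) -
        ∑ i ∈ Finset.range ((d : ℤ) + p).toNat,
          ibinom ((b : ℤ) + c - 2 * ((i : ℤ) - p) - 1) ((b : ℤ) + 2 * p - (i : ℤ) - 1) *
            (ibinom (2 * ((i : ℤ) - p)) ((i : ℤ) - 2 * p) -
              ibinom (2 * ((i : ℤ) - p)) ((i : ℤ) - 1)) := by
  rw [E_eq_det_Qd, det_Qd_formula b c p hp d]
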